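/- For every $n\in\mathbb N$, the set $C_n$ is contained in $M_{n+1}\setminus M_n$. -/

import Mathlib

open Set

noncomputable section

variable {Γ : Type*} [TopologicalSpace Γ] [DiscreteTopology Γ]

/-- `ℓ∞(Γ)`: the Banach space of bounded real functions on `Γ`
(carrying the discrete topology, so that boundedness is the only constraint). -/
abbrev Linf (Γ : Type*) [TopologicalSpace Γ] [DiscreteTopology Γ] : Type _ :=
  BoundedContinuousFunction Γ ℝ

/-- The entire part of a real number, toward `0`: `[r] = sign(r)⌊|r|⌋`. -/
def ent (r : ℝ) : ℝ := Real.sign r * ⌊|r|⌋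

lemma abs_ent_le (r : ℝ) : |ent r| ≤ |r| := by
  have hsign : |Real.sign r| ≤ 1 := by
    rcases lt_trichotomy r 0 with h | h | h
    · rw [Real.sign_of_neg h]; norm_num
    · rw [h, Real.sign_zero]; norm_num
    · rw [Real.sign_of_pos h]; norm_num
  have hfl : |(⌊|r|⌋ : ℝ)| ≤ |r| := by
    rw [abs_of_nonneg (by exact_mod_cast Int.floor_nonneg.mpr (abs_nonneg r))]
    exact Int.floor_le _
  calc |ent r| = |Real.sign r| * |(⌊|r|⌋ : ℝ)| := abs_mul _ _
    _ ≤ 1 * |r| := mul_le_mul hsign hfl (abs_nonneg _) zero_le_one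
    _ = |r| := one_mul _

/-- The coordinatewise quantization `f : ℓ∞(S) → ℓ∞(S)`, `f(x)(γ) = [x(γ)]`. -/
def quant (x : Linf Γ) : Linf Γ :=
  BoundedContinuousFunction.ofNormedAddCommGroup (fun γ => ent (x γ))
    continuous_of_discreteTopology ‖x‖ (fun γ => by
      rw [Real.norm_eq_abs]
      exact (abs_ent_le (x γ)).trans (by simpa using x.norm_coe_le_norm γ))

/-- Scalar truncation at level `s`. -/
def truncFun (s t : ℝ) : ℝ := if |t| ≤ s then t else s * t / |t|

lemma abs_truncFun_le (s t : ℝ) : |truncFun s t| ≤ max |s| |t| := by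
  unfold truncFun
  split_ifs with h
  · exact le_max_right _ _
  · by_cases ht : t = 0
    · simp [ht]
    · have hst : abs (s * t / |t|) = |s| := by
        rw [abs_div, abs_mul, abs_abs, mul_div_assoc, div_self (abs_ne_zero.mpr ht), mul_one]
      rw [hst]; exact le_max_left _ _

/-- The truncation of radius `s`: `T_s(x)(γ) = x(γ)` if `|x(γ)| ≤ s`,
and `= s·x(γ)/|x(γ)|` otherwise. -/
def trunc (s : ℝ) (x : Linf Γ) : Linf Γ :=
  BoundedContinuousFunction.ofNormedAddCommGroup (fun γ => truncFun s (x γ))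
    continuous_of_discreteTopology (max |s| ‖x‖) (fun γ => by
      rw [Real.norm_eq_abs]
      exact (abs_truncFun_le s (x γ)).trans
        (max_le_max le_rfl (by simpa using x.norm_coe_le_norm γ)))

/-- The restriction operator `r_S : ℓ∞(Γ) → ℓ∞(S)`, where `ℓ∞(S)` is identified
isometrically with the subspace of `ℓ∞(Γ)` of functions vanishing off `S`. -/
def restr (S : Set Γ) (x : Linf Γ) : Linf Γ :=
  BoundedContinuousFunction.ofNormedAddCommGroup (S.indicator x)
    continuous_of_discreteTopology ‖x‖ (fun γ => by
      rw [Real.norm_eq_abs]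
      by_cases h : γ ∈ S
      · rw [Set.indicator_of_mem h]
        simpa using x.norm_coe_le_norm γ
      · rw [Set.indicator_of_notMem h]
        simp)

/-- The ball `s·B_{ℓ∞(S)}`, viewed inside `ℓ∞(Γ)`: functions supported on `S`
of norm at most `s`. -/
def suppBall (S : Set Γ) (s : ℝ) : Set (Linf Γ) :=
  {x | (∀ γ ∉ S, x γ = 0) ∧ ‖x‖ ≤ s}

/-- `chain T a b = T (a+1) ∘ ⋯ ∘ T b` (the identity if `b ≤ a`). -/
def chain {α : Type*} (T : ℕ → α → α) (a b : ℕ) : α → α :=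
  Nat.rec id (fun k ih => ih ∘ T (a + k + 1)) (b - a)

/-- Bourgain–Delbaen data on `Γ`: a strictly increasing sequence of nonempty finite
sets `Γs n` (for `n ≥ 1`) with union `Γ`, together with compatible bounded linear
extension operators `i n : ℓ∞(Γ_n) → ℓ∞(Γ)` (realized as operators on `ℓ∞(Γ)`
factoring through the restriction `restr (Γs n)`), with norms bounded by the
positive integer `lam`. -/
structure BD (Γ : Type*) [TopologicalSpace Γ] [DiscreteTopology Γ] where
  Γs : ℕ → Set Γ
  lam : ℕ
  i : ℕ → Linf Γ →L[ℝ] Linf Γ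
  one_le_lam : 1 ≤ lam
  finite : ∀ n, 1 ≤ n → (Γs n).Finite
  nonempty : ∀ n, 1 ≤ n → (Γs n).Nonempty
  ssubset : ∀ n, 1 ≤ n → Γs n ⊂ Γs (n + 1)
  iUnion_eq : ⋃ n ∈ {k : ℕ | 1 ≤ k}, Γs n = Set.univ
  extension : ∀ n, 1 ≤ n → ∀ x : Linf Γ, ∀ γ ∈ Γs n, i n x γ = x γ
  factor : ∀ n, 1 ≤ n → ∀ x : Linf Γ, i n (restr (Γs n) x) = i n x
  compatible : ∀ n m, 1 ≤ n → n < m → ∀ x : Linf Γ, i m (restr (Γs m) (i n x)) = i n x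
  norm_i_le : ∀ n, 1 ≤ n → ‖i n‖ ≤ (lam : ℝ)

namespace BD

/-- `s n = λ^n`. -/
def s (B : BD Γ) (n : ℕ) : ℝ := (B.lam : ℝ) ^ n

/-- The sets `M_n` (with `M_0 = ∅`):
`M_n = M_{n-1} ∪ (f ∘ i_n)(f(s_n B_{ℓ∞(Γ_n)}) \ r_n(M_{n-1}))`. -/
def M (B : BD Γ) : ℕ → Set (Linf Γ)
  | 0 => ∅
  | n + 1 =>
      M B n ∪
        (fun z => quant (B.i (n + 1) z)) ''
          (quant '' suppBall (B.Γs (n + 1)) (B.s (n + 1)) \ restr (B.Γs (n + 1)) '' M B n)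

/-- `M = ⋃ n, M_n`. -/
def Mtot (B : BD Γ) : Set (Linf Γ) := ⋃ n, B.M n

/-- `C_n = (f ∘ i_{n+1} ∘ f ∘ T_{s_{n+1}} ∘ r_{n+1} ∘ i_n)
(f(s_{n+1}B_{ℓ∞(Γ_n)}) \ f(s_n B_{ℓ∞(Γ_n)}))`. -/
def C (B : BD Γ) (n : ℕ) : Set (Linf Γ) :=
  (fun z => quant (B.i (n + 1) (quant (trunc (B.s (n + 1)) (restr (B.Γs (n + 1)) (B.i n z)))))) ''
    (quant '' suppBall (B.Γs n) (B.s (n + 1)) \ quant '' suppBall (B.Γs n) (B.s n))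

/-- `D_n = M_n ∪ C_n`. -/
def D (B : BD Γ) (n : ℕ) : Set (Linf Γ) := B.M n ∪ B.C n

end BD

lemma ent_intCast (k : ℤ) : ent (k : ℝ) = k := by
  unfold ent
  have h1 : |((k : ℝ))| = ((|k| : ℤ) : ℝ) := by push_cast; rfl
  rw [h1, Int.floor_intCast]
  rcases lt_trichotomy k 0 with h | h | h
  · have hk : (k : ℝ) < 0 := by exact_mod_cast h
    rw [Real.sign_of_neg hk, abs_of_neg h]; push_cast; ring
  · simp [h]
  · have hk : (0 : ℝ) < k := by exact_mod_cast h
    rw [Real.sign_of_pos hk, abs_of_pos h]; ring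

lemma ent_ent (r : ℝ) : ent (ent r) = ent r := by
  rcases lt_trichotomy r 0 with h | h | h
  · have hr : ent r = ((-⌊|r|⌋ : ℤ) : ℝ) := by
      rw [ent, Real.sign_of_neg h]; push_cast; ring
    rw [hr, ent_intCast]
  · simp [h, ent]
  · have hr : ent r = ((⌊|r|⌋ : ℤ) : ℝ) := by
      rw [ent, Real.sign_of_pos h]; ring
    rw [hr, ent_intCast]

lemma quant_apply (x : Linf Γ) (γ : Γ) : quant x γ = ent (x γ) := rfl

lemma restr_apply (S : Set Γ) (x : Linf Γ) (γ : Γ) :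
    restr S x γ = S.indicator x γ := rfl

lemma trunc_apply (s : ℝ) (x : Linf Γ) (γ : Γ) :
    trunc s x γ = truncFun s (x γ) := rfl

lemma abs_truncFun_le' {s : ℝ} (hs : 0 ≤ s) (t : ℝ) : |truncFun s t| ≤ s := by
  unfold truncFun
  split_ifs with h
  · exact h
  · by_cases ht : t = 0
    · simp [ht]; exact hs
    · have h2 : abs (s * t / |t|) = |s| := by
        rw [abs_div, abs_mul, abs_abs, mul_div_assoc, div_self (abs_ne_zero.mpr ht), mul_one]
      rw [h2, abs_of_nonneg hs]

namespace BD

lemma s_nonneg (B : BD Γ) (n : ℕ) : 0 ≤ B.s n := pow_nonneg (Nat.cast_nonneg _) n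

lemma one_le_s (B : BD Γ) (n : ℕ) : (1 : ℝ) ≤ B.s n :=
  one_le_pow₀ (by exact_mod_cast B.one_le_lam)

lemma s_mono (B : BD Γ) {m n : ℕ} (h : m ≤ n) : B.s m ≤ B.s n :=
  pow_le_pow_right₀ (by exact_mod_cast B.one_le_lam) h

/-- Characterization helpers for elements of `quant '' suppBall S s`. -/
lemma ent_fix_of_mem_quant_image {S : Set Γ} {s : ℝ} {z : Linf Γ}
    (hz : z ∈ quant '' suppBall S s) :
    (∀ γ ∉ S, z γ = 0) ∧ ‖z‖ ≤ s ∧ ∀ γ, ent (z γ) = z γ := by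
  obtain ⟨x, ⟨hsupp, hnorm⟩, rfl⟩ := hz
  refine ⟨fun γ hγ => ?_, ?_, fun γ => ?_⟩
  · rw [quant_apply, hsupp γ hγ]; simp [ent]
  · refine le_trans ?_ hnorm
    refine (BoundedContinuousFunction.norm_le (norm_nonneg x)).2 fun γ => ?_
    rw [quant_apply, Real.norm_eq_abs]
    exact (abs_ent_le _).trans (by simpa using x.norm_coe_le_norm γ)
  · rw [quant_apply, ent_ent]

lemma mem_quant_image {S : Set Γ} {s : ℝ} {z : Linf Γ}
    (hsupp : ∀ γ ∉ S, z γ = 0) (hnorm : ‖z‖ ≤ s) (hfix : ∀ γ, ent (z γ) = z γ) :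
    z ∈ quant '' suppBall S s :=
  ⟨z, ⟨hsupp, hnorm⟩, BoundedContinuousFunction.ext fun γ => hfix γ⟩

/-- Structure of elements of `M n`. -/
lemma M_struct (B : BD Γ) : ∀ n, ∀ v ∈ B.M n,
    ∃ m u, 1 ≤ m ∧ m ≤ n ∧ u ∈ quant '' suppBall (B.Γs m) (B.s m) ∧ v = quant (B.i m u) := by
  intro n
  induction n with
  | zero => intro v hv; exact absurd hv (by simp [M])
  | succ n ih =>
    intro v hv
    rcases hv with hv | hv
    · obtain ⟨m, u, h1, h2, h3, h4⟩ := ih v hv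
      exact ⟨m, u, h1, h2.trans (Nat.le_succ n), h3, h4⟩
    · obtain ⟨u, hu, rfl⟩ := hv
      exact ⟨n + 1, u, Nat.succ_le_succ (Nat.zero_le n), le_rfl, hu.1, rfl⟩

/-- Pointwise bound on `Γ_n` for elements of `M n`. -/
lemma M_bound (B : BD Γ) (n : ℕ) (hn : 1 ≤ n) {v : Linf Γ} (hv : v ∈ B.M n)
    {γ : Γ} (hγ : γ ∈ B.Γs n) : |v γ| ≤ B.s n := by
  obtain ⟨m, u, hm1, hmn, hu, rfl⟩ := B.M_struct n v hv
  obtain ⟨-, hnorm, hfix⟩ := ent_fix_of_mem_quant_image hu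
  rcases eq_or_lt_of_le hmn with rfl | hlt
  · rw [quant_apply, B.extension m hm1 u γ hγ, hfix γ]
    have h0 : |u γ| ≤ ‖u‖ := by simpa using u.norm_coe_le_norm γ
    exact h0.trans hnorm
  · rw [quant_apply]
    refine (abs_ent_le _).trans ?_
    have h1 : |(B.i m u) γ| ≤ ‖B.i m u‖ := by simpa using (B.i m u).norm_coe_le_norm γ
    have h2 : ‖B.i m u‖ ≤ (B.lam : ℝ) * B.s m := by
      refine ((B.i m).le_opNorm u).trans ?_
      exact mul_le_mul (B.norm_i_le m hm1) hnorm (norm_nonneg u)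
        (by exact_mod_cast Nat.zero_le B.lam)
    have h3 : (B.lam : ℝ) * B.s m = B.s (m + 1) := by rw [s, s, pow_succ]; ring
    exact h1.trans (h2.trans (by rw [h3]; exact B.s_mono hlt))

end BD

/-- Lemma 5 (`contCB`): `C_n ⊆ M_{n+1} \ M_n` for every `n ∈ ℕ`. -/
theorem C_subset_M_diff (B : BD Γ) (n : ℕ) (hn : 1 ≤ n) :
    B.C n ⊆ B.M (n + 1) \ B.M n := by
  rintro - ⟨z, ⟨hz1, hz2⟩, rfl⟩
  obtain ⟨hsupp, hnorm, hfix⟩ := BD.ent_fix_of_mem_quant_image hz1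
  -- z has norm > s n, so there is γ0 ∈ Γ_n with |z γ0| > s n
  have hbig : ∃ γ0, B.s n < |z γ0| := by
    by_contra h
    push_neg at h
    exact hz2 (BD.mem_quant_image hsupp
      ((BoundedContinuousFunction.norm_le (B.s_nonneg n)).2 fun γ => by
        rw [Real.norm_eq_abs]; exact h γ) hfix)
  obtain ⟨γ0, hγ0⟩ := hbig
  have hγ0n : γ0 ∈ B.Γs n := by
    by_contra h
    rw [hsupp γ0 h] at hγ0
    simp at hγ0
    exact absurd hγ0 (not_lt.2 (B.s_nonneg n))
  have hsub : B.Γs n ⊆ B.Γs (n + 1) := (B.ssubset n hn).subset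
  have hγ0n1 : γ0 ∈ B.Γs (n + 1) := hsub hγ0n
  set w := quant (trunc (B.s (n + 1)) (restr (B.Γs (n + 1)) (B.i n z))) with hw
  -- w agrees with z on Γ_n
  have hwz : ∀ γ ∈ B.Γs n, w γ = z γ := by
    intro γ hγ
    rw [hw, quant_apply, trunc_apply, restr_apply, Set.indicator_of_mem (hsub hγ),
      B.extension n hn z γ hγ]
    have hb0 : |z γ| ≤ ‖z‖ := by simpa using z.norm_coe_le_norm γ
    have hb : |z γ| ≤ B.s (n + 1) := hb0.trans hnorm
    rw [truncFun, if_pos hb, hfix γ]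
  -- w ∈ quant '' suppBall (Γs (n+1)) (s (n+1))
  have hwmem : w ∈ quant '' suppBall (B.Γs (n + 1)) (B.s (n + 1)) := by
    refine ⟨trunc (B.s (n + 1)) (restr (B.Γs (n + 1)) (B.i n z)), ⟨fun γ hγ => ?_, ?_⟩, rfl⟩
    · rw [trunc_apply, restr_apply, Set.indicator_of_notMem hγ]
      simp [truncFun, B.s_nonneg (n + 1)]
    · refine (BoundedContinuousFunction.norm_le (B.s_nonneg (n + 1))).2 fun γ => ?_
      rw [trunc_apply, Real.norm_eq_abs]
      exact abs_truncFun_le' (B.s_nonneg (n + 1)) _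
  -- w is not a restriction of an element of M n
  have hwnot : w ∉ restr (B.Γs (n + 1)) '' B.M n := by
    rintro ⟨v, hv, hveq⟩
    have h1 : w γ0 = v γ0 := by
      rw [← hveq, restr_apply, Set.indicator_of_mem hγ0n1]
    have h2 := B.M_bound n hn hv hγ0n
    rw [← h1, hwz γ0 hγ0n] at h2
    exact absurd h2 (not_le.2 hγ0)
  constructor
  · exact Or.inr ⟨w, ⟨hwmem, hwnot⟩, rfl⟩
  · intro hmem
    have h2 := B.M_bound n hn hmem hγ0n
    rw [quant_apply, B.extension (n + 1) (by omega) w γ0 hγ0n1] at h2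
    rw [hwz γ0 hγ0n, hfix γ0] at h2
    exact absurd h2 (not_le.2 hγ0)
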